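/- Let A : H → K be a linear isometry between complex Hilbert spaces. Then the block operator U₀ = [[0, A*], [A, −(1 − AA*)]] on H × K is a self-adjoint unitary (involution), i.e., U₀ = U₀* and U₀² = 1. -/

import Mathlib

open ContinuousLinearMap

/-- The block operator `[[A₁₁, A₁₂], [A₂₁, A₂₂]]` on the Hilbert space direct sum
`H ×₂ K` (modelled as `WithLp 2 (H × K)`), `(x, y) ↦ (A₁₁x + A₁₂y, A₂₁x + A₂₂y)`. -/
noncomputable def blockOp2 {H K : Type*} [NormedAddCommGroup H] [InnerProductSpace ℂ H]
    [NormedAddCommGroup K] [InnerProductSpace ℂ K]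
    (A11 : H →L[ℂ] H) (A12 : K →L[ℂ] H) (A21 : H →L[ℂ] K) (A22 : K →L[ℂ] K) :
    WithLp 2 (H × K) →L[ℂ] WithLp 2 (H × K) :=
  ((WithLp.prodContinuousLinearEquiv 2 ℂ H K).symm : H × K →L[ℂ] WithLp 2 (H × K)) ∘L
    ((A11 ∘L ContinuousLinearMap.fst ℂ H K + A12 ∘L ContinuousLinearMap.snd ℂ H K).prod
      (A21 ∘L ContinuousLinearMap.fst ℂ H K + A22 ∘L ContinuousLinearMap.snd ℂ H K)) ∘L
    ((WithLp.prodContinuousLinearEquiv 2 ℂ H K) : WithLp 2 (H × K) →L[ℂ] H × K)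

section Aux

variable {H K : Type*} [NormedAddCommGroup H] [InnerProductSpace ℂ H]
  [NormedAddCommGroup K] [InnerProductSpace ℂ K]

lemma blockOp2_apply (A11 : H →L[ℂ] H) (A12 : K →L[ℂ] H) (A21 : H →L[ℂ] K) (A22 : K →L[ℂ] K)
    (x : WithLp 2 (H × K)) :
    blockOp2 A11 A12 A21 A22 x =
      (WithLp.prodContinuousLinearEquiv 2 ℂ H K).symm
        (A11 x.fst + A12 x.snd, A21 x.fst + A22 x.snd) := rfl

lemma blockOp2_fst (A11 : H →L[ℂ] H) (A12 : K →L[ℂ] H) (A21 : H →L[ℂ] K) (A22 : K →L[ℂ] K)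
    (x : WithLp 2 (H × K)) :
    (blockOp2 A11 A12 A21 A22 x).fst = A11 x.fst + A12 x.snd := rfl

lemma blockOp2_snd (A11 : H →L[ℂ] H) (A12 : K →L[ℂ] H) (A21 : H →L[ℂ] K) (A22 : K →L[ℂ] K)
    (x : WithLp 2 (H × K)) :
    (blockOp2 A11 A12 A21 A22 x).snd = A21 x.fst + A22 x.snd := rfl

lemma blockOp2_ext {T S : WithLp 2 (H × K) →L[ℂ] WithLp 2 (H × K)}
    (h1 : ∀ x : WithLp 2 (H × K), (T x).fst = (S x).fst)
    (h2 : ∀ x : WithLp 2 (H × K), (T x).snd = (S x).snd) : T = S := by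
  ext x
  exact WithLp.ofLp_injective 2 (Prod.ext (h1 x) (h2 x))

lemma blockOp2_mul (A11 : H →L[ℂ] H) (A12 : K →L[ℂ] H) (A21 : H →L[ℂ] K) (A22 : K →L[ℂ] K)
    (B11 : H →L[ℂ] H) (B12 : K →L[ℂ] H) (B21 : H →L[ℂ] K) (B22 : K →L[ℂ] K) :
    blockOp2 A11 A12 A21 A22 * blockOp2 B11 B12 B21 B22 =
      blockOp2 (A11 ∘L B11 + A12 ∘L B21) (A11 ∘L B12 + A12 ∘L B22)
        (A21 ∘L B11 + A22 ∘L B21) (A21 ∘L B12 + A22 ∘L B22) := by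
  apply blockOp2_ext <;> intro x <;>
    simp [mul_apply, blockOp2_fst, blockOp2_snd, map_add] <;> abel

lemma blockOp2_one : (blockOp2 (1 : H →L[ℂ] H) 0 0 (1 : K →L[ℂ] K)) = 1 := by
  apply blockOp2_ext <;> intro x <;> simp [blockOp2_fst, blockOp2_snd]

variable [CompleteSpace H] [CompleteSpace K]

lemma blockOp2_adjoint (A11 : H →L[ℂ] H) (A12 : K →L[ℂ] H) (A21 : H →L[ℂ] K) (A22 : K →L[ℂ] K) :
    adjoint (blockOp2 A11 A12 A21 A22) =
      blockOp2 (adjoint A11) (adjoint A21) (adjoint A12) (adjoint A22) := by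
  symm
  rw [ContinuousLinearMap.eq_adjoint_iff]
  intro x y
  simp only [WithLp.prod_inner_apply, WithLp.ofLp_fst, WithLp.ofLp_snd, blockOp2_fst, blockOp2_snd, inner_add_left,
    inner_add_right, ContinuousLinearMap.adjoint_inner_left]
  ring

end Aux

/-- Hellwig–Kraus: let `A : H → K` be a linear isometry between complex
Hilbert spaces.  Then the block operator `U₀ = [[0, A*], [A, −(1 − AA*)]]` on `H × K` is a
self-adjoint unitary (involution): `U₀ = U₀*` and `U₀² = 1`. -/
theorem hellwig_kraus_block_selfadjoint_unitary
    {H K : Type*} [NormedAddCommGroup H] [InnerProductSpace ℂ H] [CompleteSpace H]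
    [NormedAddCommGroup K] [InnerProductSpace ℂ K] [CompleteSpace K]
    (A : H →ₗᵢ[ℂ] K) :
    star (blockOp2 0 (adjoint A.toContinuousLinearMap) A.toContinuousLinearMap
        (-(1 - A.toContinuousLinearMap ∘L adjoint A.toContinuousLinearMap)))
      = blockOp2 0 (adjoint A.toContinuousLinearMap) A.toContinuousLinearMap
        (-(1 - A.toContinuousLinearMap ∘L adjoint A.toContinuousLinearMap)) ∧
    blockOp2 0 (adjoint A.toContinuousLinearMap) A.toContinuousLinearMap
        (-(1 - A.toContinuousLinearMap ∘L adjoint A.toContinuousLinearMap))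
      * blockOp2 0 (adjoint A.toContinuousLinearMap) A.toContinuousLinearMap
        (-(1 - A.toContinuousLinearMap ∘L adjoint A.toContinuousLinearMap)) = 1 := by
  set T := A.toContinuousLinearMap with hT
  have hAA : adjoint T ∘L T = 1 := by
    ext x
    apply ext_inner_right ℂ
    intro y
    rw [ContinuousLinearMap.comp_apply, ContinuousLinearMap.adjoint_inner_left]
    exact A.inner_map_map x y
  constructor
  · rw [star_eq_adjoint, blockOp2_adjoint]
    congr 1 <;> simp [adjoint_comp, adjoint_adjoint, ContinuousLinearMap.one_def, adjoint_id]
  · rw [blockOp2_mul]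
    rw [← blockOp2_one]
    congr 1
    · simpa using hAA
    · ext x
      have := congrFun (congrArg DFunLike.coe hAA) (adjoint T x)
      simp at this ⊢
      simp [this]
    · ext x
      have := congrFun (congrArg DFunLike.coe hAA) x
      simp at this ⊢
      simp [this]
    · ext x
      have := congrFun (congrArg DFunLike.coe hAA) (adjoint T x)
      simp at this ⊢
      simp [this]
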